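/- In the discrete weighted stochastic block model with two communities A, B of size n over alphabet {0, ..., L} (p_n(0) = 1 − u log n/n, p_n(ℓ) = a_ℓ log n/n, q_n(0) = 1 − v log n/n, q_n(ℓ) = b_ℓ log n/n, a_ℓ, b_ℓ > 0), let d_n(ℓ) = log(p_n(ℓ)/q_n(ℓ)), γ(n) = (log n)^{(log n)^{2/3}}, δ(n) = √(log n)/log log n, and let H be a fixed subset of A of size n/γ(n). Define the event Δ = { for all nodes i ∈ H, S(i, H) < δ(n) }, where S(i, H) = Σ_{j ∈ H, j ≠ i} d_n(w_{ij}). Then for all sufficiently large n, P(Δ) ≥ 9/10. -/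

import Mathlib

/-!
STATEMENT 15: In the discrete weighted stochastic block model with two communities `A`,
`B` of size `n` over the alphabet `{0, …, L}` (all `a_ℓ, b_ℓ > 0`), with
`d_n(ℓ) = log(p_n(ℓ)/q_n(ℓ))`, `γ(n) = (log n)^{(log n)^{2/3}}`,
`δ(n) = √(log n) / log log n`, and `H ⊆ A` a fixed subset of size `n / γ(n)`:
for all sufficiently large `n`, the event
`Δ = {∀ i ∈ H, S(i, H) < δ(n)}` has probability at least `9/10`.
-/

open MeasureTheory Filter
open scoped ENNReal

namespace SBM15

/-- Real mass function on the color alphabet `{0, …, L}` with parameter vector `c`. -/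
noncomputable def mass (L : ℕ) (c : Fin L → ℝ) (n : ℕ) : Fin (L + 1) → ℝ :=
  Fin.cases (1 - (∑ j, c j) * Real.log n / n) fun j => c j * Real.log n / n

/-- The corresponding distribution on the color alphabet. -/
noncomputable def colDist (L : ℕ) (c : Fin L → ℝ) (n : ℕ) : Measure (Fin (L + 1)) :=
  ∑ ℓ : Fin (L + 1), ENNReal.ofReal (mass L c n ℓ) • Measure.dirac ℓ

/-- Edges of the complete graph on the `2 n` vertices. -/
abbrev Edge (n : ℕ) := {e : Fin (2 * n) × Fin (2 * n) // e.1 < e.2}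

/-- The ground-truth community assignment. -/
def truth (n : ℕ) (i : Fin (2 * n)) : Bool := decide (i.val < n)

/-- The first community `A`. -/
def comA (n : ℕ) : Finset (Fin (2 * n)) := Finset.univ.filter fun i => i.val < n

/-- The second community `B`. -/
def comB (n : ℕ) : Finset (Fin (2 * n)) := Finset.univ.filter fun i => ¬ i.val < n

/-- Distribution of the color of one edge. -/
noncomputable def edgeMeasure (n L : ℕ) (a b : Fin L → ℝ) (e : Edge n) :
    Measure (Fin (L + 1)) :=
  if truth n e.1.1 = truth n e.1.2 then colDist L a n else colDist L b n

/-- The law of the colored random graph: all edge colors independent. -/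
noncomputable def sbm (n L : ℕ) (a b : Fin L → ℝ) : Measure (Edge n → Fin (L + 1)) :=
  Measure.pi (edgeMeasure n L a b)

/-- The color of the (unordered) edge `{i, j}`. -/
def wfun {n : ℕ} {L : ℕ} (w : Edge n → Fin (L + 1)) (i j : Fin (2 * n)) : Fin (L + 1) :=
  if h : i < j then w ⟨(i, j), h⟩ else if h' : j < i then w ⟨(j, i), h'⟩ else 0

/-- Likelihood of the observed colors `w` under the assignment `σ`. -/
noncomputable def likelihood (n L : ℕ) (a b : Fin L → ℝ) (σ : Fin (2 * n) → Bool)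
    (w : Edge n → Fin (L + 1)) : ℝ≥0∞ :=
  ∏ e : Edge n,
    if σ e.1.1 = σ e.1.2 then ENNReal.ofReal (mass L a n (w e))
    else ENNReal.ofReal (mass L b n (w e))

/-- A community assignment is balanced if each community has exactly `n` nodes. -/
def balanced (n : ℕ) (σ : Fin (2 * n) → Bool) : Prop :=
  (Finset.univ.filter fun i => σ i = true).card = n

/-- `σ` coincides with the true partition, up to swapping the two labels. -/
def equivTruth (n : ℕ) (σ : Fin (2 * n) → Bool) : Prop :=
  σ = truth n ∨ σ = fun i => !(truth n i)

/-- The log-likelihood ratio `d_n(ℓ) = log (p_n(ℓ) / q_n(ℓ))` of a single color. -/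
noncomputable def d (n L : ℕ) (a b : Fin L → ℝ) (ℓ : Fin (L + 1)) : ℝ :=
  Real.log (mass L a n ℓ / mass L b n ℓ)

/-- `S(i, H) = ∑_{j ∈ H, j ≠ i} d_n(w_ij)`. -/
noncomputable def S (n L : ℕ) (a b : Fin L → ℝ) (w : Edge n → Fin (L + 1))
    (i : Fin (2 * n)) (H : Finset (Fin (2 * n))) : ℝ :=
  ∑ j ∈ H.erase i, d n L a b (wfun w i j)

/-- `γ(n) = (log n)^{(log n)^{2/3}}`. -/
noncomputable def gam (n : ℕ) : ℝ := Real.log n ^ (Real.log n ^ ((2 : ℝ) / 3))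

/-- `δ(n) = √(log n) / log log n`. -/
noncomputable def del (n : ℕ) : ℝ := Real.sqrt (Real.log n) / Real.log (Real.log n)


/-! ### Auxiliary lemmas -/

lemma measurableSet_all {n L : ℕ} (s : Set (Edge n → Fin (L+1))) : MeasurableSet s :=
  (Set.to_countable s).measurableSet

lemma mass_zero (L : ℕ) (c : Fin L → ℝ) (n : ℕ) :
    mass L c n 0 = 1 - (∑ j, c j) * Real.log n / n := rfl

lemma mass_succ (L : ℕ) (c : Fin L → ℝ) (n : ℕ) (j : Fin L) :
    mass L c n j.succ = c j * Real.log n / n := by simp [mass]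

lemma mass_nonneg (L : ℕ) (c : Fin L → ℝ) (n : ℕ) (hc : ∀ j, 0 ≤ c j)
    (hx : 0 ≤ Real.log n) (h : (∑ j, c j) * Real.log n / n ≤ 1) (ℓ : Fin (L+1)) :
    0 ≤ mass L c n ℓ := by
  induction ℓ using Fin.cases with
  | zero => rw [mass_zero]; linarith
  | succ j => rw [mass_succ]; have := hc j; positivity

lemma colDist_apply (L : ℕ) (c : Fin L → ℝ) (n : ℕ) (s : Set (Fin (L+1))) :
    colDist L c n s = ∑ ℓ : Fin (L+1), ENNReal.ofReal (mass L c n ℓ) * s.indicator 1 ℓ := by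
  simp [colDist, Measure.finset_sum_apply, Measure.smul_apply, Measure.dirac_apply, smul_eq_mul]

lemma colDist_univ (L : ℕ) (c : Fin L → ℝ) (n : ℕ)
    (hnn : ∀ ℓ, 0 ≤ mass L c n ℓ) : colDist L c n Set.univ = 1 := by
  rw [colDist_apply]
  simp only [Set.indicator_univ, Pi.one_apply, mul_one]
  rw [← ENNReal.ofReal_sum_of_nonneg (fun ℓ _ => hnn ℓ)]
  have h : ∑ ℓ, mass L c n ℓ = 1 := by
    rw [Fin.sum_univ_succ, mass_zero]
    simp only [mass_succ]
    rw [← Finset.sum_div, ← Finset.sum_mul]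
    ring
  rw [h, ENNReal.ofReal_one]

lemma colDist_ne_zero (L : ℕ) (c : Fin L → ℝ) (n : ℕ) (hc : ∀ j, 0 ≤ c j) :
    colDist L c n ({0}ᶜ) = ENNReal.ofReal ((∑ j, c j) * Real.log n / n) := by
  rw [colDist_apply, Fin.sum_univ_succ]
  have h0 : ({0}ᶜ : Set (Fin (L+1))).indicator (1 : Fin (L+1) → ℝ≥0∞) 0 = 0 := by simp
  have hs : ∀ j : Fin L,
      ({0}ᶜ : Set (Fin (L+1))).indicator (1 : Fin (L+1) → ℝ≥0∞) j.succ = 1 := by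
    intro j
    simp [Set.indicator_apply, Fin.succ_ne_zero]
  rw [h0]
  simp only [hs, mul_one, mul_zero, zero_add, mass_succ]
  rw [← ENNReal.ofReal_sum_of_nonneg]
  · rw [← Finset.sum_div, ← Finset.sum_mul]
  · intro j _
    have := hc j
    positivity

lemma abs_log_one_sub_le {y : ℝ} (h0 : 0 ≤ y) (h1 : y ≤ 1/2) :
    |Real.log (1 - y)| ≤ 2 * y := by
  have hpos : (0:ℝ) < 1 - y := by linarith
  have hub : Real.log (1 - y) ≤ 0 := Real.log_nonpos (by linarith) (by linarith)
  have hlb : -(2*y) ≤ Real.log (1 - y) := by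
    have he : Real.exp (-(2*y)) ≤ 1 - y := by
      have h2 : 1 + 2*y ≤ Real.exp (2*y) := by
        have := Real.add_one_le_exp (2*y); linarith
      have hx2 : (0:ℝ) < 1 + 2*y := by linarith
      have hrw : Real.exp (-(2*y)) = (Real.exp (2*y))⁻¹ := by rw [Real.exp_neg]
      rw [hrw]
      have hinv : (Real.exp (2*y))⁻¹ ≤ (1 + 2*y)⁻¹ := inv_anti₀ hx2 h2
      refine hinv.trans ?_
      rw [inv_le_iff_one_le_mul₀ hx2]
      nlinarith
    calc -(2*y) = Real.log (Real.exp (-(2*y))) := by rw [Real.log_exp]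
    _ ≤ Real.log (1 - y) := Real.log_le_log (Real.exp_pos _) he
  rw [abs_le]; constructor <;> linarith

lemma card_filter_P {n : ℕ} (i : Fin (2*n)) (T : Finset (Fin (2*n))) (hiT : i ∉ T) :
    (Finset.univ.filter (fun e : Edge n =>
      (e.1.1 = i ∧ e.1.2 ∈ T) ∨ (e.1.2 = i ∧ e.1.1 ∈ T))).card = T.card := by
  classical
  have hne : ∀ j ∈ T, j ≠ i := fun j hj hji => hiT (hji ▸ hj)
  refine Finset.card_bij' (fun e _ => if e.1.1 = i then e.1.2 else e.1.1)
    (fun j hj => if h : i < j then ⟨(i, j), h⟩ else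
      ⟨(j, i), lt_of_le_of_ne (not_lt.mp h) (hne j hj)⟩) ?_ ?_ ?_ ?_
  · intro e he
    rw [Finset.mem_filter] at he
    obtain ⟨-, hP⟩ := he
    split_ifs with h
    · rcases hP with ⟨-, h2⟩ | ⟨h1, -⟩
      · exact h2
      · exact absurd e.2 (by rw [h, h1]; exact lt_irrefl i)
    · rcases hP with ⟨h1, -⟩ | ⟨-, h2⟩
      · exact absurd h1 h
      · exact h2
  · intro j hj
    rw [Finset.mem_filter]
    refine ⟨Finset.mem_univ _, ?_⟩
    split_ifs with h
    · exact Or.inl ⟨rfl, hj⟩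
    · exact Or.inr ⟨rfl, hj⟩
  · intro e he
    rw [Finset.mem_filter] at he
    obtain ⟨-, hP⟩ := he
    by_cases h1 : e.1.1 = i
    · simp only [if_pos h1]
      rw [dif_pos (h1 ▸ e.2)]
      exact Subtype.ext (Prod.ext h1.symm rfl)
    · have h2 : e.1.2 = i := by
        rcases hP with ⟨hc, -⟩ | ⟨hc, -⟩
        · exact absurd hc h1
        · exact hc
      simp only [if_neg h1]
      rw [dif_neg (not_lt.mpr (le_of_lt (h2 ▸ e.2)))]
      exact Subtype.ext (Prod.ext rfl h2.symm)
  · intro j hj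
    by_cases h : i < j
    · rw [dif_pos h]
      simp
    · rw [dif_neg h]
      simp [hne j hj]

lemma wfun_edge {n L : ℕ} (w : Edge n → Fin (L+1)) (e : Edge n) :
    wfun w e.1.1 e.1.2 = w e := by
  have h : (⟨(e.1.1, e.1.2), e.2⟩ : Edge n) = e := Subtype.ext (Prod.ext rfl rfl)
  unfold wfun
  rw [dif_pos e.2, h]

lemma wfun_edge' {n L : ℕ} (w : Edge n → Fin (L+1)) (e : Edge n) :
    wfun w e.1.2 e.1.1 = w e := by
  have h : (⟨(e.1.1, e.1.2), e.2⟩ : Edge n) = e := Subtype.ext (Prod.ext rfl rfl)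
  unfold wfun
  rw [dif_neg (asymm e.2), dif_pos e.2, h]

set_option maxHeartbeats 3200000 in
theorem statement15 (L : ℕ) (hL : 1 ≤ L) (a b : Fin L → ℝ)
    (ha : ∀ ℓ, 0 < a ℓ) (hb : ∀ ℓ, 0 < b ℓ) :
    ∀ᶠ n : ℕ in Filter.atTop, ∀ H : Finset (Fin (2 * n)),
      H ⊆ comA n → (H.card : ℝ) = (n : ℝ) / gam n →
      9 / 10 ≤ (sbm n L a b {w | ∀ i ∈ H, S n L a b w i H < del n}).toReal := by
  classical
  have hsa0 : 0 < ∑ j, a j := Finset.sum_pos (fun j _ => ha j) ⟨⟨0, hL⟩, Finset.mem_univ _⟩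
  have hsb0 : 0 < ∑ j, b j := Finset.sum_pos (fun j _ => hb j) ⟨⟨0, hL⟩, Finset.mem_univ _⟩
  set sa := ∑ j, a j with hsa_def
  set sb := ∑ j, b j with hsb_def
  set D0 := ∑ j, |Real.log (a j / b j)| with hD0_def
  have hD00 : 0 ≤ D0 := Finset.sum_nonneg fun j _ => abs_nonneg _
  have hD0ge : ∀ j : Fin L, |Real.log (a j / b j)| ≤ D0 := by
    intro j
    rw [hD0_def]
    exact Finset.single_le_sum (f := fun j => |Real.log (a j / b j)|)
      (fun i _ => abs_nonneg _) (Finset.mem_univ j)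
  have hcast : Tendsto (fun n : ℕ => (n:ℝ)) atTop atTop := tendsto_natCast_atTop_atTop
  have hlogT : Tendsto (fun n : ℕ => Real.log n) atTop atTop :=
    Real.tendsto_log_atTop.comp hcast
  -- eventual smallness of `log y / y`
  have hsmall : ∀ᶠ y : ℝ in atTop, sa * Real.log y / y ≤ 1/2 ∧ sb * Real.log y / y ≤ 1/2 := by
    have hla := Real.isLittleO_log_id_atTop.def (c := (2*sa)⁻¹) (by positivity)
    have hlb := Real.isLittleO_log_id_atTop.def (c := (2*sb)⁻¹) (by positivity)
    filter_upwards [hla, hlb, eventually_ge_atTop (1:ℝ)] with y h1 h2 hy1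
    have hy0 : (0:ℝ) < y := by linarith
    have hly : 0 ≤ Real.log y := Real.log_nonneg hy1
    simp only [Real.norm_eq_abs, id_eq, abs_of_nonneg hly, abs_of_pos hy0] at h1 h2
    constructor
    · rw [div_le_iff₀ hy0]
      have h2sa : 0 < 2 * sa := by linarith
      rw [inv_mul_eq_div, le_div_iff₀ h2sa] at h1
      nlinarith
    · rw [div_le_iff₀ hy0]
      have h2sb : 0 < 2 * sb := by linarith
      rw [inv_mul_eq_div, le_div_iff₀ h2sb] at h2
      nlinarith
  -- eventual facts about `y = log n`
  have hbig : ∀ᶠ y : ℝ in atTop,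
      (1 ≤ y ∧ y^(4:ℕ) ≤ y ^ (y ^ ((2:ℝ)/3)) ∧ sa ≤ y ∧ 2*(sa+sb) ≤ y) ∧
      (D0 + 2 ≤ y ^ ((1:ℝ)/20) ∧ Real.log y ≤ y ^ ((1:ℝ)/20) ∧ 1 ≤ Real.log y) ∧
      (Real.log 10 ≤ y ∧ 6 ≤ y ^ ((1:ℝ)/15)) := by
    have h4 : ∀ᶠ y : ℝ in atTop, (4:ℝ) ≤ y ^ ((2:ℝ)/3) :=
      (tendsto_rpow_atTop (by norm_num)).eventually_ge_atTop 4
    have h20 : ∀ᶠ y : ℝ in atTop, D0 + 2 ≤ y ^ ((1:ℝ)/20) :=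
      (tendsto_rpow_atTop (by norm_num)).eventually_ge_atTop _
    have h15 : ∀ᶠ y : ℝ in atTop, (6:ℝ) ≤ y ^ ((1:ℝ)/15) :=
      (tendsto_rpow_atTop (by norm_num)).eventually_ge_atTop _
    have hlog20 : ∀ᶠ y : ℝ in atTop, Real.log y ≤ y ^ ((1:ℝ)/20) := by
      have hd := (isLittleO_log_rpow_atTop (by norm_num : (0:ℝ) < 1/20)).def one_pos
      filter_upwards [hd, eventually_ge_atTop (1:ℝ)] with y h hy1
      have h' : |Real.log y| ≤ 1 * |y ^ ((1:ℝ)/20)| := by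
        simpa [Real.norm_eq_abs] using h
      calc Real.log y ≤ |Real.log y| := le_abs_self _
      _ ≤ 1 * |y ^ ((1:ℝ)/20)| := h'
      _ = y ^ ((1:ℝ)/20) := by
          rw [one_mul, abs_of_nonneg (Real.rpow_nonneg (by linarith) _)]
    have h1log : ∀ᶠ y : ℝ in atTop, 1 ≤ Real.log y :=
      Real.tendsto_log_atTop.eventually_ge_atTop 1
    filter_upwards [eventually_ge_atTop (1:ℝ), h4, eventually_ge_atTop sa,
      eventually_ge_atTop (2*(sa+sb)), h20, hlog20, h1log,
      eventually_ge_atTop (Real.log 10), h15]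
      with y hy1 hy4 hysa hy2s hy20 hylog h1l hy10 hy15
    refine ⟨⟨hy1, ?_, hysa, hy2s⟩, ⟨hy20, hylog, h1l⟩, hy10, hy15⟩
    calc y^(4:ℕ) = y ^ ((4:ℕ):ℝ) := (Real.rpow_natCast y 4).symm
    _ ≤ y ^ (y ^ ((2:ℝ)/3)) := Real.rpow_le_rpow_of_exponent_le hy1 (by exact_mod_cast hy4)
  filter_upwards [hcast.eventually hsmall, hlogT.eventually hbig, eventually_ge_atTop 3]
    with n hsm hbg hn3
  intro H hsub hcard
  obtain ⟨hax, hbx⟩ := hsm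
  obtain ⟨⟨hx1, hg4, hsax, h2s⟩, ⟨hD20, hlx, h1lx⟩, h10, h6⟩ := hbg
  set x := Real.log n with hx_def
  have hn0 : (0:ℝ) < n := by
    have : (3:ℝ) ≤ (n:ℝ) := by exact_mod_cast hn3
    linarith
  have hx0 : (0:ℝ) < x := lt_of_lt_of_le one_pos hx1
  set g := gam n with hg_def
  have hgam : g = x ^ (x ^ ((2:ℝ)/3)) := rfl
  have hg4' : x^(4:ℕ) ≤ g := hg4
  have hg1 : (1:ℝ) ≤ g := le_trans (one_le_pow₀ hx1) hg4'
  have hg0 : (0:ℝ) < g := lt_of_lt_of_le one_pos hg1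
  have hx2 : (1:ℝ) ≤ x * x := by nlinarith only [hx1]
  have hxle : x * x ≤ x ^ (4:ℕ) := by nlinarith only [hx2, mul_self_nonneg x]
  have h2sg : 2*(sa+sb) * x ≤ g := by nlinarith only [hxle, hg4', h2s, hx0]
  have hsaxg : sa * x ≤ g ^ ((1:ℝ)/2) := by
    have hsax2 : sa * x ≤ x * x := mul_le_mul_of_nonneg_right hsax hx0.le
    have hsq : (sa*x)^2 ≤ g := by
      calc (sa*x)^2 ≤ (x*x)^2 := by
            apply pow_le_pow_left₀ (by positivity) hsax2
      _ = x^(4:ℕ) := by ring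
      _ ≤ g := hg4' 
    calc sa * x = Real.sqrt ((sa*x)^2) := (Real.sqrt_sq (by positivity)).symm
    _ ≤ Real.sqrt g := Real.sqrt_le_sqrt hsq
    _ = g ^ ((1:ℝ)/2) := Real.sqrt_eq_rpow g
  set K := ⌈x ^ ((2:ℝ)/5)⌉₊ with hK_def
  have hx25 : (0:ℝ) ≤ x ^ ((2:ℝ)/5) := Real.rpow_nonneg hx0.le _
  have hKge : x ^ ((2:ℝ)/5) ≤ (K:ℝ) := Nat.le_ceil _
  have hKlt : (K:ℝ) < x ^ ((2:ℝ)/5) + 1 := Nat.ceil_lt_add_one hx25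
  have hone25 : (1:ℝ) ≤ x ^ ((2:ℝ)/5) := by
    have := Real.rpow_le_rpow_of_exponent_le hx1 (by norm_num : (0:ℝ) ≤ 2/5)
    rwa [Real.rpow_zero] at this
  -- deterministic threshold bound
  have hlogx0 : 0 < Real.log x := lt_of_lt_of_le one_pos h1lx
  have hdel : x ^ ((2:ℝ)/5) * D0 + 2 ≤ del n := by
    have hstep1 : x ^ ((2:ℝ)/5) * D0 + 2 ≤ (D0 + 2) * x ^ ((2:ℝ)/5) := by
      nlinarith only [hone25, hD00]
    have hstep2 : (D0 + 2) * x ^ ((2:ℝ)/5) ≤ x ^ ((1:ℝ)/20) * x ^ ((2:ℝ)/5) :=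
      mul_le_mul_of_nonneg_right hD20 (by positivity)
    have hprod : x ^ ((1:ℝ)/20) * x ^ ((2:ℝ)/5) = x ^ ((9:ℝ)/20) := by
      rw [← Real.rpow_add hx0]; norm_num
    have hlast : x ^ ((9:ℝ)/20) * Real.log x ≤ x ^ ((1:ℝ)/2) := by
      calc x ^ ((9:ℝ)/20) * Real.log x ≤ x ^ ((9:ℝ)/20) * x ^ ((1:ℝ)/20) :=
        mul_le_mul_of_nonneg_left hlx (by positivity)
      _ = x ^ ((1:ℝ)/2) := by rw [← Real.rpow_add hx0]; norm_num
    have hdiv : x ^ ((9:ℝ)/20) ≤ x ^ ((1:ℝ)/2) / Real.log x :=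
      (le_div_iff₀ hlogx0).mpr hlast
    have hdel_eq : del n = x ^ ((1:ℝ)/2) / Real.log x := by
      rw [del, Real.sqrt_eq_rpow]
    rw [hdel_eq]
    calc x ^ ((2:ℝ)/5) * D0 + 2 ≤ (D0 + 2) * x ^ ((2:ℝ)/5) := hstep1
    _ ≤ x ^ ((1:ℝ)/20) * x ^ ((2:ℝ)/5) := hstep2
    _ = x ^ ((9:ℝ)/20) := hprod
    _ ≤ x ^ ((1:ℝ)/2) / Real.log x := hdiv
  -- tail bound numeric ingredient
  have htail : Real.log 10 + x ≤ ((K:ℝ)/2) * (x ^ ((2:ℝ)/3) * Real.log x) := by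
    have hAB : 6 ≤ x ^ ((1:ℝ)/15) * Real.log x := by nlinarith only [h6, h1lx]
    have hfac0 : 0 ≤ x ^ ((2:ℝ)/3) * Real.log x :=
      mul_nonneg (Real.rpow_nonneg hx0.le _) hlogx0.le
    have hmono : (x ^ ((2:ℝ)/5)/2) * (x ^ ((2:ℝ)/3) * Real.log x) ≤
        ((K:ℝ)/2) * (x ^ ((2:ℝ)/3) * Real.log x) := by
      apply mul_le_mul_of_nonneg_right _ hfac0
      linarith
    refine le_trans ?_ hmono
    have h1 : x ^ ((2:ℝ)/5) * x ^ ((2:ℝ)/3) = x * x ^ ((1:ℝ)/15) := by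
      have h2 : x * x ^ ((1:ℝ)/15) = x ^ (1 + (1:ℝ)/15) := by
        rw [Real.rpow_add hx0, Real.rpow_one]
      rw [h2, ← Real.rpow_add hx0]; norm_num
    have heq : (x ^ ((2:ℝ)/5)/2) * (x ^ ((2:ℝ)/3) * Real.log x) =
        x * x ^ ((1:ℝ)/15) * Real.log x / 2 := by
      rw [div_mul_eq_mul_div, ← mul_assoc, h1]
    rw [heq]
    linarith only [mul_le_mul_of_nonneg_left hAB hx0.le, h10,
      (Real.log_pos (by norm_num : (1:ℝ) < 10)).le]
  -- probability measures
  have hmassa : ∀ ℓ, 0 ≤ mass L a n ℓ := by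
    refine mass_nonneg L a n (fun j => (ha j).le) hx0.le ?_
    rw [← hsa_def, ← hx_def]; linarith
  have hmassb : ∀ ℓ, 0 ≤ mass L b n ℓ := by
    refine mass_nonneg L b n (fun j => (hb j).le) hx0.le ?_
    rw [← hsb_def, ← hx_def]; linarith
  have hca : IsProbabilityMeasure (colDist L a n) := ⟨colDist_univ L a n hmassa⟩
  have hcb : IsProbabilityMeasure (colDist L b n) := ⟨colDist_univ L b n hmassb⟩
  haveI := hca
  haveI := hcb
  haveI hpe : ∀ e : Edge n, IsProbabilityMeasure (edgeMeasure n L a b e) := by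
    intro e
    unfold edgeMeasure
    split_ifs <;> assumption
  haveI hμprob : IsProbabilityMeasure (sbm n L a b) := by
    unfold sbm; infer_instance
  set p1r := sa * x / n with hp1r_def
  have hp1r0 : 0 ≤ p1r := by positivity
  have hcolA : colDist L a n ({0}ᶜ) = ENNReal.ofReal p1r := by
    rw [colDist_ne_zero L a n (fun j => (ha j).le), ← hsa_def, ← hx_def]
  have htruth : ∀ i ∈ H, truth n i = true := by
    intro i hi
    have := (Finset.mem_filter.mp (hsub hi)).2
    simp [truth, this]
  -- the boxes
  set bset := fun (i : Fin (2*n)) (T : Finset (Fin (2*n))) =>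
    Set.pi Set.univ (fun e : Edge n =>
      if (e.1.1 = i ∧ e.1.2 ∈ T) ∨ (e.1.2 = i ∧ e.1.1 ∈ T) then ({0}ᶜ : Set (Fin (L+1)))
      else Set.univ) with hbset_def
  have hboxmeas : ∀ i ∈ H, ∀ T ∈ (H.erase i).powersetCard K,
      sbm n L a b (bset i T) = (ENNReal.ofReal p1r) ^ K := by
    intro i hi T hT
    rw [Finset.mem_powersetCard] at hT
    obtain ⟨hTsub, hTcard⟩ := hT
    have hiT : i ∉ T := fun h => (Finset.ne_of_mem_erase (hTsub h)) rfl
    have hTH : ∀ j ∈ T, j ∈ H := fun j hj => Finset.mem_of_mem_erase (hTsub hj)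
    rw [hbset_def]
    show Measure.pi (edgeMeasure n L a b) _ = _
    rw [Measure.pi_pi]
    have hfac : ∀ e : Edge n, edgeMeasure n L a b e
        (if (e.1.1 = i ∧ e.1.2 ∈ T) ∨ (e.1.2 = i ∧ e.1.1 ∈ T)
          then ({0}ᶜ : Set (Fin (L+1))) else Set.univ) =
        if (e.1.1 = i ∧ e.1.2 ∈ T) ∨ (e.1.2 = i ∧ e.1.1 ∈ T)
          then ENNReal.ofReal p1r else 1 := by
      intro e
      split_ifs with hP
      · have h1 : truth n e.1.1 = true := by
          rcases hP with ⟨h1, h2⟩ | ⟨h1, h2⟩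
          · exact h1 ▸ htruth i hi
          · exact htruth _ (hTH _ h2)
        have h2 : truth n e.1.2 = true := by
          rcases hP with ⟨ha1, ha2⟩ | ⟨ha1, ha2⟩
          · exact htruth _ (hTH _ ha2)
          · exact ha1 ▸ htruth i hi
        unfold edgeMeasure
        rw [if_pos (h1.trans h2.symm), hcolA]
      · unfold edgeMeasure
        split_ifs
        · exact measure_univ
        · exact measure_univ
    calc ∏ e : Edge n, edgeMeasure n L a b e _
        = ∏ e : Edge n, (if (e.1.1 = i ∧ e.1.2 ∈ T) ∨ (e.1.2 = i ∧ e.1.1 ∈ T)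
            then ENNReal.ofReal p1r else 1) := Finset.prod_congr rfl (fun e _ => hfac e)
    _ = (ENNReal.ofReal p1r) ^ K := by
        rw [Finset.prod_ite, Finset.prod_const, Finset.prod_const_one, mul_one,
          card_filter_P i T hiT, hTcard]
  -- d-value bounds
  have hya0 : 0 ≤ sa * x / n := hp1r0
  have hyb0 : 0 ≤ sb * x / n := by positivity
  have hd0 : |d n L a b 0| ≤ 2*(sa+sb)*x/n := by
    unfold d
    rw [mass_zero, mass_zero, ← hsa_def, ← hsb_def, ← hx_def]
    have hpa : (0:ℝ) < 1 - sa * x / n := by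
      have : sa * x / n ≤ 1/2 := by rw [hx_def]; exact hax
      linarith
    have hpb : (0:ℝ) < 1 - sb * x / n := by
      have : sb * x / n ≤ 1/2 := by rw [hx_def]; exact hbx
      linarith
    rw [Real.log_div hpa.ne' hpb.ne']
    have h1 := abs_log_one_sub_le hya0 (by rw [hx_def]; exact hax)
    have h2 := abs_log_one_sub_le hyb0 (by rw [hx_def]; exact hbx)
    calc |Real.log (1 - sa*x/n) - Real.log (1 - sb*x/n)|
        ≤ |Real.log (1 - sa*x/n)| + |Real.log (1 - sb*x/n)| := abs_sub _ _
    _ ≤ 2*(sa*x/n) + 2*(sb*x/n) := add_le_add h1 h2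
    _ = 2*(sa+sb)*x/n := by ring
  have hdsucc : ∀ j : Fin L, d n L a b (Fin.succ j) = Real.log (a j / b j) := by
    intro j
    unfold d
    rw [mass_succ, mass_succ]
    congr 1
    have hbj : b j ≠ 0 := (hb j).ne'
    have hxne : Real.log (n:ℕ) ≠ 0 := by rw [← hx_def]; exact hx0.ne'
    have hnne : ((n:ℕ):ℝ) ≠ 0 := hn0.ne'
    field_simp
  have hdle : ∀ ℓ : Fin (L+1), ℓ ≠ 0 → d n L a b ℓ ≤ D0 := by
    intro ℓ hℓ
    induction ℓ using Fin.cases with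
    | zero => exact absurd rfl hℓ
    | succ j => rw [hdsucc j]; exact le_trans (le_abs_self _) (hD0ge j)
  -- bound on S in terms of the number of nonzero colors
  have hcard' : (H.card : ℝ) = n / g := hcard
  have hSbound : ∀ w : Edge n → Fin (L+1), ∀ i, i ∈ H →
      S n L a b w i H ≤
        (((H.erase i).filter (fun j => wfun w i j ≠ 0)).card : ℝ) * D0 + 1 := by
    intro w i hi
    unfold S
    rw [← Finset.sum_filter_add_sum_filter_not (H.erase i) (fun j => wfun w i j ≠ 0)]
    have hpart1 : ∑ j ∈ (H.erase i).filter (fun j => wfun w i j ≠ 0), d n L a b (wfun w i j)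
        ≤ (((H.erase i).filter (fun j => wfun w i j ≠ 0)).card : ℝ) * D0 := by
      have h := Finset.sum_le_card_nsmul ((H.erase i).filter (fun j => wfun w i j ≠ 0))
        (fun j => d n L a b (wfun w i j)) D0
        (fun j hj => hdle _ (Finset.mem_filter.mp hj).2)
      simpa [nsmul_eq_mul] using h
    have hpart2 : ∑ j ∈ (H.erase i).filter (fun j => ¬ wfun w i j ≠ 0), d n L a b (wfun w i j)
        ≤ 1 := by
      have hterm : ∀ j ∈ (H.erase i).filter (fun j => ¬ wfun w i j ≠ 0),
          d n L a b (wfun w i j) ≤ 2*(sa+sb)*x/n := by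
        intro j hj
        have h0 : wfun w i j = 0 := not_not.mp (Finset.mem_filter.mp hj).2
        rw [h0]
        exact le_trans (le_abs_self _) hd0
      have hb0 : (0:ℝ) ≤ 2*(sa+sb)*x/n := by positivity
      have hcle : (((H.erase i).filter (fun j => ¬ wfun w i j ≠ 0)).card : ℝ) ≤ H.card := by
        exact_mod_cast le_trans (Finset.card_filter_le _ _) (Finset.card_erase_le)
      calc ∑ j ∈ (H.erase i).filter (fun j => ¬ wfun w i j ≠ 0), d n L a b (wfun w i j)
          ≤ (((H.erase i).filter (fun j => ¬ wfun w i j ≠ 0)).card : ℝ) * (2*(sa+sb)*x/n) := by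
            have h := Finset.sum_le_card_nsmul _ _ _ hterm
            simpa [nsmul_eq_mul] using h
      _ ≤ (H.card : ℝ) * (2*(sa+sb)*x/n) := mul_le_mul_of_nonneg_right hcle hb0
      _ = 2*(sa+sb)*x/g := by
          rw [hcard']
          field_simp
      _ ≤ 1 := by rw [div_le_one hg0]; exact h2sg
    linarith only [hpart1, hpart2]
  -- inclusion of the complement in the union of boxes
  have hincl : {w : Edge n → Fin (L+1) | ∀ i ∈ H, S n L a b w i H < del n}ᶜ ⊆
      ⋃ i ∈ H, ⋃ T ∈ (H.erase i).powersetCard K, bset i T := by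
    intro w hw
    simp only [Set.mem_compl_iff, Set.mem_setOf_eq, not_forall, not_lt] at hw
    obtain ⟨i, hi, hSi⟩ := hw
    have hNK : K ≤ ((H.erase i).filter (fun j => wfun w i j ≠ 0)).card := by
      by_contra hcon
      push_neg at hcon
      have h1 : (((H.erase i).filter (fun j => wfun w i j ≠ 0)).card : ℝ) + 1 ≤ (K:ℝ) := by
        exact_mod_cast Nat.succ_le_of_lt hcon
      have h2 : (((H.erase i).filter (fun j => wfun w i j ≠ 0)).card : ℝ) ≤ x ^ ((2:ℝ)/5) := by
        linarith
      have h3 := hSbound w i hi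
      have h4 : (((H.erase i).filter (fun j => wfun w i j ≠ 0)).card : ℝ) * D0 + 1 < del n := by
        nlinarith only [hdel, hD00, h2]
      linarith only [hSi, h3, h4]
    obtain ⟨T, hTN, hTcard⟩ := Finset.exists_subset_card_eq hNK
    have hTsub : T ⊆ H.erase i := hTN.trans (Finset.filter_subset _ _)
    have hmemT : T ∈ (H.erase i).powersetCard K := Finset.mem_powersetCard.mpr ⟨hTsub, hTcard⟩
    have hwmem : w ∈ bset i T := by
      rw [hbset_def, Set.mem_univ_pi]
      intro e
      split_ifs with hP
      · rcases hP with ⟨h1, h2⟩ | ⟨h1, h2⟩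
        · have hj := (Finset.mem_filter.mp (hTN h2)).2
          have : wfun w e.1.1 e.1.2 ≠ 0 := by rw [h1]; exact hj
          rw [wfun_edge] at this
          exact this
        · have hj := (Finset.mem_filter.mp (hTN h2)).2
          have : wfun w e.1.2 e.1.1 ≠ 0 := by rw [h1]; exact hj
          rw [wfun_edge'] at this
          exact this
      · trivial
    exact Set.mem_biUnion hi (Set.mem_biUnion hmemT hwmem)
  -- the union bound
  have hHcast : ((H.card : ℝ≥0∞)) = ENNReal.ofReal (H.card : ℝ) := by
    rw [ENNReal.ofReal_natCast]
  have hchoose : ((H.card - 1).choose K : ℝ) ≤ (H.card : ℝ) ^ K := by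
    calc ((H.card - 1).choose K : ℝ) ≤ ((H.card - 1) ^ K : ℕ) := by
          exact_mod_cast Nat.choose_le_pow (H.card - 1) K
    _ ≤ ((H.card ^ K : ℕ) : ℝ) := by
          exact_mod_cast Nat.pow_le_pow_left (Nat.sub_le _ _) K
    _ = (H.card : ℝ) ^ K := by push_cast; ring
  have hμbad : sbm n L a b ({w : Edge n → Fin (L+1) | ∀ i ∈ H, S n L a b w i H < del n}ᶜ)
      ≤ ENNReal.ofReal (1/10) := by
    have hsumbound : sbm n L a b
        (⋃ i ∈ H, ⋃ T ∈ (H.erase i).powersetCard K, bset i T)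
        ≤ ∑ i ∈ H, ∑ T ∈ (H.erase i).powersetCard K, sbm n L a b (bset i T) := by
      refine le_trans (measure_biUnion_finset_le H _) ?_
      exact Finset.sum_le_sum fun i _ => measure_biUnion_finset_le _ _
    have hsumval : ∑ i ∈ H, ∑ T ∈ (H.erase i).powersetCard K, sbm n L a b (bset i T)
        = (H.card : ℝ≥0∞) * (((H.card - 1).choose K : ℝ≥0∞) * (ENNReal.ofReal p1r) ^ K) := by
      rw [Finset.sum_congr rfl (fun i hi => Finset.sum_congr rfl (fun T hT => hboxmeas i hi T hT))]
      have hinner : ∀ i ∈ H, ∑ _T ∈ (H.erase i).powersetCard K, (ENNReal.ofReal p1r) ^ K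
          = ((H.card - 1).choose K : ℝ≥0∞) * (ENNReal.ofReal p1r) ^ K := by
        intro i hi
        rw [Finset.sum_const, Finset.card_powersetCard, Finset.card_erase_of_mem hi,
          nsmul_eq_mul]
      rw [Finset.sum_congr rfl hinner, Finset.sum_const, nsmul_eq_mul]
    have hreal : (H.card : ℝ) * ((H.card : ℝ) ^ K * p1r ^ K) ≤ 1/10 := by
      have hHc : (H.card : ℝ) = n / g := hcard'
      have hK2 : ((K:ℝ)) * Real.log (g ^ (-(1:ℝ)/2)) = -(((K:ℝ)/2) * Real.log g) := by
        rw [Real.log_rpow hg0]; ring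
      have hfrac : (n / g) * p1r = sa * x / g := by
        rw [hp1r_def]; field_simp
      have hfle : sa * x / g ≤ g ^ (-(1:ℝ)/2) := by
        rw [div_le_iff₀ hg0]
        have : g ^ (-(1:ℝ)/2) * g = g ^ ((1:ℝ)/2) := by
          nth_rewrite 2 [← Real.rpow_one g]
          rw [← Real.rpow_add hg0]
          norm_num
        rw [this]
        exact hsaxg
      have hfrac0 : 0 ≤ (n / g) * p1r := by positivity
      have hpow : ((n / g) * p1r) ^ K ≤ (g ^ (-(1:ℝ)/2)) ^ K := by
        rw [hfrac]
        exact pow_le_pow_left₀ (by positivity) hfle K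
      have hgK : (g ^ (-(1:ℝ)/2)) ^ K = (g ^ ((K:ℝ)/2))⁻¹ := by
        rw [← Real.rpow_natCast (g ^ (-(1:ℝ)/2)) K, ← Real.rpow_mul hg0.le]
        rw [show (-(1:ℝ)/2 * (K:ℝ)) = -((K:ℝ)/2) by ring, Real.rpow_neg hg0.le]
      have h10n : (10:ℝ) * n ≤ g ^ ((K:ℝ)/2) := by
        have hlg : Real.log g = x ^ ((2:ℝ)/3) * Real.log x := by
          rw [hgam, Real.log_rpow hx0]
        have hexp : g ^ ((K:ℝ)/2) = Real.exp (((K:ℝ)/2) * Real.log g) := by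
          rw [Real.rpow_def_of_pos hg0, mul_comm]
        have h10e : (10:ℝ) * n = Real.exp (Real.log 10 + Real.log n) := by
          rw [Real.exp_add, Real.exp_log (by norm_num : (0:ℝ) < 10), Real.exp_log hn0]
        rw [hexp, h10e]
        apply Real.exp_le_exp.mpr
        rw [hlg, ← hx_def]
        exact htail
      have hchain : (H.card : ℝ) * ((H.card : ℝ) ^ K * p1r ^ K)
          = (n/g) * ((n/g) * p1r) ^ K := by
        rw [hHc, mul_pow]
      rw [hchain]
      have hng : n / g ≤ (n:ℝ) := div_le_self hn0.le hg1
      have hpos : 0 < g ^ ((K:ℝ)/2) := Real.rpow_pos_of_pos hg0 _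
      calc (n/g) * ((n/g) * p1r) ^ K ≤ (n:ℝ) * (g ^ ((K:ℝ)/2))⁻¹ := by
            rw [← hgK]
            apply mul_le_mul hng hpow (by positivity) hn0.le
      _ ≤ 1/10 := by
            rw [inv_eq_one_div, mul_one_div, div_le_div_iff₀ hpos (by norm_num)]
            linarith only [h10n]
    have hconv : (H.card : ℝ≥0∞) * (((H.card - 1).choose K : ℝ≥0∞) * (ENNReal.ofReal p1r) ^ K)
        ≤ ENNReal.ofReal (1/10) := by
      have hch : ((H.card - 1).choose K : ℝ≥0∞) ≤ ENNReal.ofReal ((H.card : ℝ) ^ K) := by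
        rw [show ((H.card - 1).choose K : ℝ≥0∞) = ENNReal.ofReal (((H.card - 1).choose K : ℝ))
          from (ENNReal.ofReal_natCast _).symm]
        exact ENNReal.ofReal_le_ofReal hchoose
      calc (H.card : ℝ≥0∞) * (((H.card - 1).choose K : ℝ≥0∞) * (ENNReal.ofReal p1r) ^ K)
          ≤ (H.card : ℝ≥0∞) * (ENNReal.ofReal ((H.card : ℝ) ^ K) * (ENNReal.ofReal p1r) ^ K) := by
            apply mul_le_mul_right (mul_le_mul_left hch _)
      _ = ENNReal.ofReal ((H.card : ℝ) * ((H.card : ℝ) ^ K * p1r ^ K)) := by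
            rw [hHcast, ← ENNReal.ofReal_pow hp1r0, ← ENNReal.ofReal_mul (by positivity),
              ← ENNReal.ofReal_mul (by positivity)]
      _ ≤ ENNReal.ofReal (1/10) := ENNReal.ofReal_le_ofReal hreal
    calc sbm n L a b ({w : Edge n → Fin (L+1) | ∀ i ∈ H, S n L a b w i H < del n}ᶜ)
        ≤ sbm n L a b (⋃ i ∈ H, ⋃ T ∈ (H.erase i).powersetCard K, bset i T) :=
          measure_mono hincl
    _ ≤ ∑ i ∈ H, ∑ T ∈ (H.erase i).powersetCard K, sbm n L a b (bset i T) := hsumbound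
    _ = _ := hsumval
    _ ≤ ENNReal.ofReal (1/10) := hconv
  -- conclude
  have hcompl : sbm n L a b {w : Edge n → Fin (L+1) | ∀ i ∈ H, S n L a b w i H < del n}
      = 1 - sbm n L a b ({w : Edge n → Fin (L+1) | ∀ i ∈ H, S n L a b w i H < del n}ᶜ) := by
    rw [← prob_compl_eq_one_sub (measurableSet_all _), compl_compl]
  have hge : ENNReal.ofReal (9/10) ≤
      sbm n L a b {w : Edge n → Fin (L+1) | ∀ i ∈ H, S n L a b w i H < del n} := by
    rw [hcompl]
    calc ENNReal.ofReal (9/10) = 1 - ENNReal.ofReal (1/10) := by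
          rw [← ENNReal.ofReal_one, ← ENNReal.ofReal_sub _ (by norm_num)]
          norm_num
    _ ≤ 1 - sbm n L a b ({w : Edge n → Fin (L+1) | ∀ i ∈ H, S n L a b w i H < del n}ᶜ) :=
          tsub_le_tsub_left hμbad 1
  calc (9:ℝ)/10 = (ENNReal.ofReal (9/10)).toReal := by
        rw [ENNReal.toReal_ofReal (by norm_num)]
  _ ≤ (sbm n L a b {w : Edge n → Fin (L+1) | ∀ i ∈ H, S n L a b w i H < del n}).toReal :=
        ENNReal.toReal_mono (measure_ne_top _ _) hge

end SBM15
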